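/- Fix d, k ≥ 0 and let f : S_n → ℝ be a k-local statistic. If λ ⊢ n satisfies m_1(λ) = m_2(λ) = ⋯ = m_{dk}(λ) = 0 (no cycles of length ≤ dk), then the d-th conditional moment of f on the conjugacy class K_λ equals the d-th conditional moment on the class of n-cycles: E(f^d | K_λ) = E(f^d | K_{(n)}). -/

import Mathlib

open Finset

/-- Indicator function of a partial permutation: `1_{I,J}(w) = 1` if the permutation `w`
maps the list `I` entrywise to the list `J`, and `0` otherwise. -/
def indFunR {n : ℕ} (I J : List (Fin n)) (w : Equiv.Perm (Fin n)) : ℝ :=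
  if I.map ⇑w = J then 1 else 0

/-- A statistic `f : S_n → ℝ` is `k`-local if it lies in the `ℝ`-span of the indicator
functions `1_{I,J}` over partial permutations of size (at most) `k`. -/
def IsLocalR (n k : ℕ) (f : Equiv.Perm (Fin n) → ℝ) : Prop :=
  f ∈ Submodule.span ℝ {g : Equiv.Perm (Fin n) → ℝ | ∃ I J : List (Fin n),
    I.Nodup ∧ J.Nodup ∧ I.length = J.length ∧ I.length ≤ k ∧ g = indFunR I J}

/-- The cycles (orbits) of a permutation of `Fin n` (fixed points count as 1-cycles). -/
def cyclesOf {n : ℕ} (w : Equiv.Perm (Fin n)) : Finset (Finset (Fin n)) :=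
  Finset.image (fun i => Finset.univ.filter (fun j => w.SameCycle i j)) Finset.univ

/-- The cycle type of a permutation, as the multiset of its orbit sizes. -/
def typeOf {n : ℕ} (w : Equiv.Perm (Fin n)) : Multiset ℕ :=
  (cyclesOf w).val.map Finset.card

/-- `m_i(w)`: the number of cycles of length `i` of the permutation `w`. -/
def numCycLen {n : ℕ} (w : Equiv.Perm (Fin n)) (i : ℕ) : ℕ :=
  ((cyclesOf w).filter (fun C => C.card = i)).card

/-- The Reynolds operator: `R f(w) = (1/n!) ∑_{v ∈ S_n} f(v⁻¹ w v)`, i.e. the conditional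
expectation `E(f | K_λ)` where `λ` is the cycle type of `w`. -/
noncomputable def reynolds {n : ℕ} (f : Equiv.Perm (Fin n) → ℝ)
    (w : Equiv.Perm (Fin n)) : ℝ :=
  (n.factorial : ℝ)⁻¹ * ∑ v : Equiv.Perm (Fin n), f (v⁻¹ * w * v)


namespace MomentAux

open scoped Classical

variable {n : ℕ}

noncomputable def chiF (S : Finset (Fin n × Fin n)) (w : Equiv.Perm (Fin n)) : ℝ :=
  if ∀ p ∈ S, w p.1 = p.2 then 1 else 0

noncomputable def SolSet (w : Equiv.Perm (Fin n)) (S : Finset (Fin n × Fin n)) :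
    Finset (Equiv.Perm (Fin n)) :=
  Finset.univ.filter (fun v => ∀ p ∈ S, v p.2 = w (v p.1))

noncomputable def cnt (w : Equiv.Perm (Fin n)) (S : Finset (Fin n × Fin n)) : ℕ :=
  (SolSet w S).card

def AllLong (w : Equiv.Perm (Fin n)) (E : ℕ) : Prop :=
  ∀ t : Fin n, ∀ j : ℕ, 1 ≤ j → j ≤ E → (w ^ j) t ≠ t

def reach (S : Finset (Fin n × Fin n)) : ℕ → Fin n → Fin n → Prop
  | 0 => fun a b => a = b
  | j+1 => fun a c => ∃ b, (a, b) ∈ S ∧ reach S j b c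

def Acyclic (S : Finset (Fin n × Fin n)) : Prop :=
  ¬ ∃ (a : Fin n) (j : ℕ), 1 ≤ j ∧ reach S j a a

def genSet (n k : ℕ) : Set (Equiv.Perm (Fin n) → ℝ) :=
  {g | ∃ S : Finset (Fin n × Fin n), S.card ≤ k ∧ g = chiF S}


lemma reach_mono {S S' : Finset (Fin n × Fin n)} (h : S ⊆ S') :
    ∀ j a b, reach S j a b → reach S' j a b := by
  intro j
  induction j with
  | zero => intro a b h'; exact h'
  | succ j ih => rintro a b ⟨m, hm, hr⟩; exact ⟨m, h hm, ih _ _ hr⟩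

lemma reach_add {S : Finset (Fin n × Fin n)} (s t : ℕ) (a c : Fin n) :
    reach S (s + t) a c ↔ ∃ b, reach S s a b ∧ reach S t b c := by
  induction s generalizing a with
  | zero => simp [reach]
  | succ s ih =>
    have hst : s + 1 + t = (s + t) + 1 := by omega
    rw [hst]
    constructor
    · rintro ⟨m, hm, hr⟩
      rcases (ih m).mp hr with ⟨b, hb1, hb2⟩
      exact ⟨b, ⟨m, hm, hb1⟩, hb2⟩
    · rintro ⟨b, ⟨m, hm, hmb⟩, hbc⟩
      exact ⟨m, hm, (ih m).mpr ⟨b, hmb, hbc⟩⟩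

lemma reach_src {S : Finset (Fin n × Fin n)} {j : ℕ} {a c : Fin n}
    (h : reach S (j+1) a c) : a ∈ S.image Prod.fst := by
  rcases h with ⟨b, hb, -⟩
  exact Finset.mem_image.mpr ⟨(a, b), hb, rfl⟩

lemma reach_tgt {S : Finset (Fin n × Fin n)} : ∀ {j : ℕ}, 1 ≤ j → ∀ {a c : Fin n},
    reach S j a c → c ∈ S.image Prod.snd := by
  intro j
  induction j with
  | zero => omega
  | succ j ih =>
    intro _ a c h
    rcases h with ⟨b, hb, hr⟩
    rcases Nat.eq_zero_or_pos j with hj | hj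
    · subst hj; cases hr; exact Finset.mem_image.mpr ⟨(a, c), hb, rfl⟩
    · exact ih hj hr

/-- backward determinism from injectivity of targets -/
lemma reach_back_unique {S : Finset (Fin n × Fin n)}
    (inj2 : ∀ p ∈ S, ∀ q ∈ S, p.2 = q.2 → p.1 = q.1) :
    ∀ (j : ℕ) (a b x : Fin n), reach S j a x → reach S j b x → a = b := by
  intro j
  induction j with
  | zero => intro a b x h1 h2; cases h1; cases h2; rfl
  | succ j ih =>
    rintro a b x ⟨m, hm, hr⟩ ⟨m', hm', hr'⟩
    have := ih m m' x hr hr'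
    subst this
    exact inj2 (a, m) hm (b, m) hm' rfl

lemma orbit_card_le (w : Equiv.Perm (Fin n)) (t : Fin n) (j : ℕ) (hj : 1 ≤ j)
    (h : (w ^ j) t = t) :
    (Finset.univ.filter (fun s => w.SameCycle t s)).card ≤ j := by
  have hjz : (0:ℤ) < (j:ℤ) := by exact_mod_cast hj
  have hsub : (Finset.univ.filter (fun s => w.SameCycle t s)) ⊆
      (Finset.univ : Finset (Fin j)).image (fun i : Fin j => (w ^ (i : ℕ)) t) := by
    intro s hs
    rw [Finset.mem_filter] at hs
    obtain ⟨m, hm⟩ := hs.2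
    have hfix : ∀ q : ℤ, (w ^ ((j : ℤ) * q)) t = t := by
      intro q
      rw [zpow_mul]
      have : (w ^ (j : ℤ)) t = t := by rw [zpow_natCast]; exact h
      exact Equiv.Perm.zpow_apply_eq_self_of_apply_eq_self this q
    have h1 : 0 ≤ m % (j:ℤ) := Int.emod_nonneg m hjz.ne'
    have hmod : (w ^ (m % (j : ℤ))) t = s := by
      calc (w ^ (m % (j : ℤ))) t = (w ^ (m % (j : ℤ))) ((w ^ ((j:ℤ) * (m / j))) t) := by
            rw [hfix]
        _ = (w ^ (m % (j:ℤ) + (j:ℤ) * (m/j))) t := by rw [zpow_add]; rfl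
        _ = (w ^ m) t := by rw [add_comm, Int.mul_ediv_add_emod m j]
        _ = s := hm
    have hlt : (m % (j : ℤ)).toNat < j := by
      have h2 : m % (j:ℤ) < j := Int.emod_lt_of_pos m hjz
      omega
    refine Finset.mem_image.mpr ⟨⟨(m % (j:ℤ)).toNat, hlt⟩, Finset.mem_univ _, ?_⟩
    show (w ^ (((m % (j:ℤ)).toNat : ℕ))) t = s
    rw [← zpow_natCast]
    rw [Int.toNat_of_nonneg h1]
    exact hmod
  calc _ ≤ _ := Finset.card_le_card hsub
    _ ≤ (Finset.univ : Finset (Fin j)).card := Finset.card_image_le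
    _ = j := by simp

lemma orbit_card_pos (w : Equiv.Perm (Fin n)) (t : Fin n) :
    0 < (Finset.univ.filter (fun s => w.SameCycle t s)).card := by
  refine Finset.card_pos.mpr ⟨t, ?_⟩
  simp [Equiv.Perm.SameCycle.refl]

lemma orbit_mem_cyclesOf (w : Equiv.Perm (Fin n)) (t : Fin n) :
    (Finset.univ.filter (fun s => w.SameCycle t s)) ∈ cyclesOf w :=
  Finset.mem_image.mpr ⟨t, Finset.mem_univ _, rfl⟩

lemma allLong_of_numCycLen {w : Equiv.Perm (Fin n)} {E : ℕ}
    (hw : ∀ i : ℕ, 1 ≤ i → i ≤ E → numCycLen w i = 0) : AllLong w E := by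
  intro t j hj1 hjE h
  set O := (Finset.univ.filter (fun s => w.SameCycle t s)) with hO
  have h1 : 1 ≤ O.card := orbit_card_pos w t
  have h2 : O.card ≤ j := orbit_card_le w t j hj1 h
  have hz := hw O.card h1 (le_trans h2 hjE)
  have hne : ((cyclesOf w).filter (fun C => C.card = O.card)).Nonempty :=
    ⟨O, Finset.mem_filter.mpr ⟨orbit_mem_cyclesOf w t, rfl⟩⟩
  rw [← Finset.card_pos] at hne
  unfold numCycLen at hz
  omega

lemma n_pos_of_typeOf {c : Equiv.Perm (Fin n)} (hc : typeOf c = {n}) : 0 < n := by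
  by_contra h
  have hn : n = 0 := by omega
  subst hn
  have : cyclesOf c = ∅ := by
    simp [cyclesOf]
  rw [typeOf, this] at hc
  simp at hc

lemma allLong_of_typeOf {c : Equiv.Perm (Fin n)} {E : ℕ} (hc : typeOf c = {n})
    (hE : E < n) : AllLong c E := by
  intro t j hj1 hjE h
  set O := (Finset.univ.filter (fun s => c.SameCycle t s)) with hO
  have h2 : O.card ≤ j := orbit_card_le c t j hj1 h
  have h3 : O.card ∈ typeOf c := Multiset.mem_map.mpr ⟨O, orbit_mem_cyclesOf c t, rfl⟩
  rw [hc, Multiset.mem_singleton] at h3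
  omega

lemma E_lt_n {w : Equiv.Perm (Fin n)} {E : ℕ} (hn : 0 < n)
    (hw : AllLong w E) : E < n := by
  by_contra h
  push_neg at h
  set t : Fin n := ⟨0, hn⟩
  have hcard : Fintype.card (Fin n) < Fintype.card (Fin (n+1)) := by simp
  obtain ⟨i, i', hne, heq⟩ := Fintype.exists_ne_map_eq_of_card_lt
    (fun i : Fin (n+1) => (w ^ (i : ℕ)) t) hcard
  rcases Ne.lt_or_gt hne with hlt | hlt
  · have : (w ^ ((i' : ℕ) - (i : ℕ))) t = t := by
      have h2 : (w ^ (i:ℕ)) ((w ^ ((i':ℕ) - (i:ℕ))) t) = (w ^ (i:ℕ)) t := by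
        rw [← Equiv.Perm.mul_apply, ← pow_add]
        rw [show (i:ℕ) + ((i':ℕ) - (i:ℕ)) = (i':ℕ) by omega]
        exact heq.symm
      exact (Equiv.injective _) h2
    exact hw t _ (by omega) (by have := i'.isLt; omega) this
  · have : (w ^ ((i : ℕ) - (i' : ℕ))) t = t := by
      have h2 : (w ^ (i':ℕ)) ((w ^ ((i:ℕ) - (i':ℕ))) t) = (w ^ (i':ℕ)) t := by
        rw [← Equiv.Perm.mul_apply, ← pow_add]
        rw [show (i':ℕ) + ((i:ℕ) - (i':ℕ)) = (i:ℕ) by omega]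
        exact heq
      exact (Equiv.injective _) h2
    exact hw t _ (by omega) (by have := i.isLt; omega) this

lemma sol_transport {w : Equiv.Perm (Fin n)} {S : Finset (Fin n × Fin n)}
    {v : Equiv.Perm (Fin n)} (hv : v ∈ SolSet w S) :
    ∀ (j : ℕ) (a b : Fin n), reach S j a b → v b = (w ^ j) (v a) := by
  rw [SolSet, Finset.mem_filter] at hv
  intro j
  induction j with
  | zero => intro a b h; cases h; simp
  | succ j ih =>
    rintro a b ⟨m, hm, hr⟩
    have h1 : v m = w (v a) := hv.2 (a, m) hm
    rw [ih m b hr, h1, ← Equiv.Perm.mul_apply, ← Equiv.Perm.mul_apply, ← pow_succ]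
    rfl

lemma solset_empty_of_cycle {w : Equiv.Perm (Fin n)} {E : ℕ} (hw : AllLong w E)
    {S : Finset (Fin n × Fin n)} (hS : S.card ≤ E) {a : Fin n} {j : ℕ}
    (hj : 1 ≤ j) (hr : reach S j a a) : SolSet w S = ∅ := by
  -- minimal cycle length
  have hex : ∃ j, 1 ≤ j ∧ reach S j a a := ⟨j, hj, hr⟩
  set j₀ := Nat.find hex with hj₀
  obtain ⟨hj₀1, hr₀⟩ := Nat.find_spec hex
  have hmin : ∀ i, 1 ≤ i → i < j₀ → ¬ reach S i a a := by
    intro i h1 h2 hri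
    exact Nat.find_min hex h2 ⟨h1, hri⟩
  -- points along the cycle
  have hdec : ∀ i : Fin j₀, ∃ p : Fin n, reach S i a p ∧ reach S (j₀ - i) p a := by
    intro i
    have : reach S ((i : ℕ) + (j₀ - (i:ℕ))) a a := by
      rw [show (i:ℕ) + (j₀ - (i:ℕ)) = j₀ by have := i.isLt; omega]
      exact hr₀
    exact (reach_add _ _ _ _).mp this
  set pf : Fin j₀ → Fin n := fun i => Classical.choose (hdec i) with hpf
  have hpf1 : ∀ i : Fin j₀, reach S i a (pf i) := fun i => (Classical.choose_spec (hdec i)).1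
  have hpf2 : ∀ i : Fin j₀, reach S (j₀ - i) (pf i) a := fun i => (Classical.choose_spec (hdec i)).2
  have hinj : Function.Injective pf := by
    intro s t hst
    by_contra hne
    have hne' : (s:ℕ) ≠ (t:ℕ) := fun h => hne (Fin.ext h)
    -- wlog s < t
    rcases Nat.lt_or_ge (s:ℕ) (t:ℕ) with hlt | hge
    · have hcomb : reach S ((s:ℕ) + (j₀ - (t:ℕ))) a a :=
        (reach_add _ _ _ _).mpr ⟨pf s, hpf1 s, hst ▸ hpf2 t⟩
      exact hmin _ (by have := t.isLt; omega) (by have := t.isLt; omega) hcomb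
    · have hlt : (t:ℕ) < (s:ℕ) := by omega
      have hcomb : reach S ((t:ℕ) + (j₀ - (s:ℕ))) a a :=
        (reach_add _ _ _ _).mpr ⟨pf t, hpf1 t, hst ▸ hpf2 s⟩
      exact hmin _ (by have := s.isLt; omega) (by have := s.isLt; omega) hcomb
  have hmem : ∀ i : Fin j₀, pf i ∈ S.image Prod.fst := by
    intro i
    have h2 := hpf2 i
    have : ∃ m, j₀ - (i:ℕ) = m + 1 := ⟨j₀ - (i:ℕ) - 1, by have := i.isLt; omega⟩
    obtain ⟨m, hm⟩ := this
    rw [hm] at h2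
    exact reach_src h2
  have hcard : j₀ ≤ S.card := by
    have h1 : (Finset.univ : Finset (Fin j₀)).card ≤ (S.image Prod.fst).card :=
      Finset.card_le_card_of_injOn pf (fun i _ => hmem i) (fun i _ i' _ h => hinj h)
    have h2 : (S.image Prod.fst).card ≤ S.card := Finset.card_image_le
    simpa using le_trans h1 h2
  -- conclude
  rw [Finset.eq_empty_iff_forall_notMem]
  intro v hv
  have := sol_transport hv j₀ a a hr₀
  exact hw (v a) j₀ hj₀1 (le_trans hcard hS) this.symm

lemma exists_terminal {S : Finset (Fin n × Fin n)} (hS : S.Nonempty) (hA : Acyclic S) :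
    ∃ x y : Fin n, (x, y) ∈ S ∧ y ∉ S.image Prod.fst := by
  by_contra hcon
  push_neg at hcon
  have step : ∀ z ∈ S.image Prod.fst, ∃ y, (z, y) ∈ S ∧ y ∈ S.image Prod.fst := by
    intro z hz
    obtain ⟨p, hp, hpz⟩ := Finset.mem_image.mp hz
    exact ⟨p.2, by rw [← hpz]; simpa using hp, hcon p.1 p.2 (by simpa using hp)⟩
  obtain ⟨p₀, hp₀⟩ := hS
  have ha₀ : p₀.1 ∈ S.image Prod.fst := Finset.mem_image.mpr ⟨p₀, hp₀, rfl⟩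
  let q : ℕ → {z : Fin n // z ∈ S.image Prod.fst} := fun i =>
    Nat.rec ⟨p₀.1, ha₀⟩
      (fun _ prev => ⟨Classical.choose (step prev.1 prev.2),
        (Classical.choose_spec (step prev.1 prev.2)).2⟩) i
  have hedge : ∀ i : ℕ, ((q i).1, (q (i+1)).1) ∈ S := by
    intro i
    exact (Classical.choose_spec (step (q i).1 (q i).2)).1
  have hwalk : ∀ d i : ℕ, reach S d (q i).1 (q (i + d)).1 := by
    intro d
    induction d with
    | zero => intro i; rfl
    | succ d ih =>
      intro i
      have h1 : reach S 1 (q i).1 (q (i+1)).1 := ⟨(q (i+1)).1, hedge i, rfl⟩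
      have h2 : reach S d (q (i+1)).1 (q (i+1+d)).1 := ih (i+1)
      have h3 : reach S (1 + d) (q i).1 (q (i+1+d)).1 :=
        (reach_add 1 d _ _).mpr ⟨(q (i+1)).1, h1, h2⟩
      rw [show (1:ℕ) + d = d + 1 by omega] at h3
      rw [show i + 1 + d = i + (d+1) by omega] at h3
      exact h3
  have hpig : ∃ s t : ℕ, s ≠ t ∧ (q s).1 = (q t).1 := by
    obtain ⟨s, t, hst, h⟩ := Finite.exists_ne_map_eq_of_infinite (fun i : ℕ => (q i).1)
    exact ⟨s, t, hst, h⟩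
  obtain ⟨s, t, hst, hq⟩ := hpig
  rcases Nat.lt_or_ge s t with hlt | hge
  · have := hwalk (t - s) s
    rw [show s + (t - s) = t by omega] at this
    rw [← hq] at this
    exact hA ⟨(q s).1, t - s, by omega, this⟩
  · have hlt : t < s := by omega
    have := hwalk (s - t) t
    rw [show t + (s - t) = s by omega] at this
    rw [hq] at this
    exact hA ⟨(q t).1, s - t, by omega, this⟩

lemma exists_source {S : Finset (Fin n × Fin n)} (hA : Acyclic S) {x : Fin n}
    (hx : x ∈ S.image Prod.snd) :
    ∃ a : Fin n, (∃ j, reach S j a x) ∧ a ∉ S.image Prod.snd := by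
  by_contra hcon
  push_neg at hcon
  have step : ∀ z : Fin n, (∃ j, reach S j z x) →
      ∃ b, (b, z) ∈ S ∧ (∃ j, reach S j b x) := by
    intro z hz
    obtain ⟨p, hp, hpz⟩ := Finset.mem_image.mp (hcon z hz)
    obtain ⟨j, hj⟩ := hz
    exact ⟨p.1, by rw [← hpz]; simpa using hp, j + 1, ⟨z, by rw [← hpz]; simpa using hp, hj⟩⟩
  let q : ℕ → {z : Fin n // ∃ j, reach S j z x} := fun i =>
    Nat.rec ⟨x, 0, rfl⟩
      (fun _ prev => ⟨Classical.choose (step prev.1 prev.2),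
        (Classical.choose_spec (step prev.1 prev.2)).2⟩) i
  have hedge : ∀ i : ℕ, ((q (i+1)).1, (q i).1) ∈ S := by
    intro i
    exact (Classical.choose_spec (step (q i).1 (q i).2)).1
  have hwalk : ∀ d i : ℕ, reach S d (q (i + d)).1 (q i).1 := by
    intro d
    induction d with
    | zero => intro i; rfl
    | succ d ih =>
      intro i
      have h1 : reach S 1 (q (i+1)).1 (q i).1 := ⟨(q i).1, hedge i, rfl⟩
      have h2 : reach S d (q (i+1+d)).1 (q (i+1)).1 := ih (i+1)
      have h3 : reach S (d + 1) (q (i+1+d)).1 (q i).1 :=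
        (reach_add d 1 _ _).mpr ⟨(q (i+1)).1, h2, h1⟩
      rw [show i + 1 + d = i + (d+1) by omega] at h3
      exact h3
  obtain ⟨s, t, hst, hq⟩ := Finite.exists_ne_map_eq_of_infinite (fun i : ℕ => (q i).1)
  rcases Nat.lt_or_ge s t with hlt | hge
  · have := hwalk (t - s) s
    rw [show s + (t - s) = t by omega, ← hq] at this
    exact hA ⟨(q s).1, t - s, by omega, this⟩
  · have hlt : t < s := by omega
    have := hwalk (s - t) t
    rw [show t + (s - t) = s by omega, hq] at this
    exact hA ⟨(q t).1, s - t, by omega, this⟩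

lemma source_unique_aux {S : Finset (Fin n × Fin n)}
    (inj2 : ∀ p ∈ S, ∀ q ∈ S, p.2 = q.2 → p.1 = q.1)
    {a a' x : Fin n} {j j' : ℕ} (hle : j ≤ j') (h : reach S j a x) (h' : reach S j' a' x)
    (ha : a ∉ S.image Prod.snd) : a' = a := by
  have hdec : reach S ((j' - j) + j) a' x := by rw [show j' - j + j = j' by omega]; exact h'
  obtain ⟨mid, h1, h2⟩ := (reach_add _ _ _ _).mp hdec
  have hmid : mid = a := reach_back_unique inj2 j mid a x h2 h
  subst hmid
  rcases Nat.eq_zero_or_pos (j' - j) with h0 | h0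
  · rw [h0] at h1; exact h1
  · exact absurd (reach_tgt h0 h1) ha

lemma source_unique {S : Finset (Fin n × Fin n)}
    (inj2 : ∀ p ∈ S, ∀ q ∈ S, p.2 = q.2 → p.1 = q.1)
    {a a' x : Fin n} {j j' : ℕ} (h : reach S j a x) (h' : reach S j' a' x)
    (ha : a ∉ S.image Prod.snd) (ha' : a' ∉ S.image Prod.snd) : a = a' := by
  rcases le_total j j' with hle | hle
  · exact (source_unique_aux inj2 hle h h' ha).symm
  · exact source_unique_aux inj2 hle h' h ha'

lemma reach_insert_decomp {S : Finset (Fin n × Fin n)} {x a : Fin n}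
    (hx : x ∉ S.image Prod.fst) :
    ∀ (j : ℕ) (b c : Fin n), reach (insert (x, a) S) j b c →
      reach S j b c ∨ ∃ s t : ℕ, reach S s b x ∧ reach (insert (x, a) S) t a c ∧ j = s + 1 + t := by
  intro j
  induction j with
  | zero => intro b c h; exact Or.inl h
  | succ j ih =>
    rintro b c ⟨m, hm, hr⟩
    rcases Finset.mem_insert.mp hm with heq | hmem
    · -- (b, m) = (x, a)
      have hb : b = x := (Prod.mk.injEq _ _ _ _).mp heq |>.1
      have hm' : m = a := (Prod.mk.injEq _ _ _ _).mp heq |>.2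
      subst hb; subst hm'
      exact Or.inr ⟨0, j, rfl, hr, by omega⟩
    · rcases ih m c hr with h | ⟨s, t, h1, h2, h3⟩
      · exact Or.inl ⟨m, hmem, h⟩
      · exact Or.inr ⟨s + 1, t, ⟨m, hmem, h1⟩, h2, by omega⟩

lemma acyclic_insert {S : Finset (Fin n × Fin n)} {x a : Fin n}
    (hA : Acyclic S) (hx : x ∉ S.image Prod.fst)
    (hna : ¬ ∃ i, reach S i a x) : Acyclic (insert (x, a) S) := by
  rintro ⟨b, j, hj1, hr⟩
  rcases reach_insert_decomp hx j b b hr with h | ⟨s, t, h1, h2, _⟩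
  · exact hA ⟨b, j, hj1, h⟩
  · -- combine: a reaches b in S' , b reaches x in S
    have hbx : reach (insert (x,a) S) s b x := reach_mono (Finset.subset_insert _ _) s b x h1
    have hax : reach (insert (x,a) S) (t + s) a x := (reach_add _ _ _ _).mpr ⟨b, h2, hbx⟩
    rcases reach_insert_decomp hx (t+s) a x hax with h | ⟨s', t', h1', _, _⟩
    · exact hna ⟨t + s, h⟩
    · exact hna ⟨s', h1'⟩

lemma cnt_empty (hn : 0 < n) (w : Equiv.Perm (Fin n)) :
    cnt w (∅ : Finset (Fin n × Fin n)) = Nat.factorial n := by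
  rw [cnt, SolSet]
  simp [Finset.card_univ, Fintype.card_perm]

lemma cnt_fiber (w : Equiv.Perm (Fin n)) (q : Finset (Fin n × Fin n)) (x : Fin n) :
    cnt w q = ∑ a : Fin n, cnt w (insert (x, a) q) := by
  rw [cnt]
  rw [Finset.card_eq_sum_card_fiberwise
    (f := fun v => v⁻¹ (w (v x))) (t := Finset.univ) (fun v _ => Finset.mem_univ _)]
  refine Finset.sum_congr rfl (fun a _ => ?_)
  congr 1
  rw [SolSet, SolSet]
  rw [Finset.filter_filter]
  apply Finset.filter_congr
  intro v _
  rw [Finset.forall_mem_insert]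
  have hiff : v⁻¹ (w (v x)) = a ↔ v a = w (v x) :=
    ⟨fun h => by rw [← h]; simp, fun h => by rw [← h]; simp⟩
  constructor
  · rintro ⟨h2, h1⟩
    exact ⟨hiff.mp h1, h2⟩
  · rintro ⟨h1, h2⟩
    exact ⟨h2, hiff.mpr h1⟩

lemma solset_insert_snd_empty {w : Equiv.Perm (Fin n)} {q : Finset (Fin n × Fin n)}
    {x a : Fin n} (hx : x ∉ q.image Prod.fst) (ha : a ∈ q.image Prod.snd) :
    SolSet w (insert (x, a) q) = ∅ := by
  rw [Finset.eq_empty_iff_forall_notMem]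
  intro v hv
  rw [SolSet, Finset.mem_filter] at hv
  obtain ⟨p, hp, hpa⟩ := Finset.mem_image.mp ha
  have h1 : v a = w (v x) := hv.2 (x, a) (Finset.mem_insert_self _ _)
  have h2 : v a = w (v p.1) := by
    rw [← hpa]
    exact hv.2 p (Finset.mem_insert_of_mem hp)
  have : v x = v p.1 := w.injective (h1.symm.trans h2)
  have : x = p.1 := v.injective this
  exact hx (Finset.mem_image.mpr ⟨p, hp, this.symm⟩)

lemma cnt_insert_fresh_eq (w : Equiv.Perm (Fin n)) (q : Finset (Fin n × Fin n)) (x : Fin n)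
    {a b : Fin n}
    (ha1 : a ∉ q.image Prod.fst) (ha2 : a ∉ q.image Prod.snd) (hax : a ≠ x)
    (hb1 : b ∉ q.image Prod.fst) (hb2 : b ∉ q.image Prod.snd) (hbx : b ≠ x) :
    cnt w (insert (x, a) q) = cnt w (insert (x, b) q) := by
  rw [cnt, cnt]
  apply Finset.card_bij' (fun v _ => v * Equiv.swap a b) (fun v _ => v * Equiv.swap a b)
  · -- maps into
    intro v hv
    rw [SolSet, Finset.mem_filter] at hv ⊢
    refine ⟨Finset.mem_univ _, ?_⟩
    intro p hp
    rcases Finset.mem_insert.mp hp with heq | hmem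
    · subst heq
      show (v * Equiv.swap a b) b = w ((v * Equiv.swap a b) x)
      have e1 : (v * Equiv.swap a b) b = v a := by
        simp [Equiv.Perm.mul_apply, Equiv.swap_apply_right]
      have e2 : (v * Equiv.swap a b) x = v x := by
        simp [Equiv.Perm.mul_apply, Equiv.swap_apply_of_ne_of_ne (Ne.symm hax) (Ne.symm hbx)]
      rw [e1, e2]
      exact hv.2 (x, a) (Finset.mem_insert_self _ _)
    · have hp1 : p.1 ≠ a := fun h => ha1 (Finset.mem_image.mpr ⟨p, hmem, h⟩)
      have hp1' : p.1 ≠ b := fun h => hb1 (Finset.mem_image.mpr ⟨p, hmem, h⟩)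
      have hp2 : p.2 ≠ a := fun h => ha2 (Finset.mem_image.mpr ⟨p, hmem, h⟩)
      have hp2' : p.2 ≠ b := fun h => hb2 (Finset.mem_image.mpr ⟨p, hmem, h⟩)
      have e1 : (v * Equiv.swap a b) p.2 = v p.2 := by
        simp [Equiv.Perm.mul_apply, Equiv.swap_apply_of_ne_of_ne hp2 hp2']
      have e2 : (v * Equiv.swap a b) p.1 = v p.1 := by
        simp [Equiv.Perm.mul_apply, Equiv.swap_apply_of_ne_of_ne hp1 hp1']
      rw [e1, e2]
      exact hv.2 p (Finset.mem_insert_of_mem hmem)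
  · -- other direction: symmetric
    intro v hv
    rw [SolSet, Finset.mem_filter] at hv ⊢
    refine ⟨Finset.mem_univ _, ?_⟩
    intro p hp
    rcases Finset.mem_insert.mp hp with heq | hmem
    · subst heq
      show (v * Equiv.swap a b) a = w ((v * Equiv.swap a b) x)
      have e1 : (v * Equiv.swap a b) a = v b := by
        simp [Equiv.Perm.mul_apply, Equiv.swap_apply_left]
      have e2 : (v * Equiv.swap a b) x = v x := by
        simp [Equiv.Perm.mul_apply, Equiv.swap_apply_of_ne_of_ne (Ne.symm hax) (Ne.symm hbx)]
      rw [e1, e2]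
      exact hv.2 (x, b) (Finset.mem_insert_self _ _)
    · have hp1 : p.1 ≠ a := fun h => ha1 (Finset.mem_image.mpr ⟨p, hmem, h⟩)
      have hp1' : p.1 ≠ b := fun h => hb1 (Finset.mem_image.mpr ⟨p, hmem, h⟩)
      have hp2 : p.2 ≠ a := fun h => ha2 (Finset.mem_image.mpr ⟨p, hmem, h⟩)
      have hp2' : p.2 ≠ b := fun h => hb2 (Finset.mem_image.mpr ⟨p, hmem, h⟩)
      have e1 : (v * Equiv.swap a b) p.2 = v p.2 := by
        simp [Equiv.Perm.mul_apply, Equiv.swap_apply_of_ne_of_ne hp2 hp2']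
      have e2 : (v * Equiv.swap a b) p.1 = v p.1 := by
        simp [Equiv.Perm.mul_apply, Equiv.swap_apply_of_ne_of_ne hp1 hp1']
      rw [e1, e2]
      exact hv.2 p (Finset.mem_insert_of_mem hmem)
  · intro v _
    rw [mul_assoc]
    simp
  · intro v _
    rw [mul_assoc]
    simp

set_option maxHeartbeats 1000000 in
lemma main_count (hn : 0 < n) {w : Equiv.Perm (Fin n)} {E : ℕ} (hw : AllLong w E) :
    ∀ (N : ℕ) (S : Finset (Fin n × Fin n)),
      S.card * (n+1) + ((S.image Prod.fst) \ (S.image Prod.snd)).card ≤ N →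
      (∀ p ∈ S, ∀ r ∈ S, p.1 = r.1 → p = r) →
      (∀ p ∈ S, ∀ r ∈ S, p.2 = r.2 → p = r) →
      Acyclic S → S.card ≤ E →
      cnt w S = n * (n - S.card - 1).factorial := by
  intro N
  induction N with
  | zero =>
    intro S hm _ _ _ _
    have h0 : S.card * (n+1) = 0 := by omega
    have hS : S = ∅ := by
      rcases Nat.mul_eq_zero.mp h0 with h | h
      · exact Finset.card_eq_zero.mp h
      · omega
    subst hS
    rw [cnt_empty hn w]
    simp [← Nat.mul_factorial_pred hn.ne']
  | succ N ih =>
    intro S hm hinj1 hinj2 hA hE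
    by_cases hSe : S = ∅
    · subst hSe
      rw [cnt_empty hn w]
      simp [← Nat.mul_factorial_pred hn.ne']
    have hSne : S.Nonempty := Finset.nonempty_iff_ne_empty.mpr hSe
    obtain ⟨x, y, hxyS, hyf⟩ := exists_terminal hSne hA
    set q := S.erase (x, y) with hqdef
    set e := S.card with he
    have he1 : 1 ≤ e := Finset.card_pos.mpr hSne
    have hqcard : q.card = e - 1 := by rw [hqdef, Finset.card_erase_of_mem hxyS]
    have hqsub : q ⊆ S := Finset.erase_subset _ _
    have hS_ins : S = insert (x, y) q := (Finset.insert_erase hxyS).symm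
    have hxfS : x ∈ S.image Prod.fst := Finset.mem_image.mpr ⟨(x,y), hxyS, rfl⟩
    have hyx : y ≠ x := fun h => hyf (h ▸ hxfS)
    have hxq : x ∉ q.image Prod.fst := by
      intro hxq
      obtain ⟨p, hp, hp1⟩ := Finset.mem_image.mp hxq
      have hpxy : p = (x, y) := hinj1 p (hqsub hp) (x,y) hxyS hp1
      exact (Finset.mem_erase.mp hp).1 hpxy
    have hyq2 : y ∉ q.image Prod.snd := by
      intro hyq
      obtain ⟨p, hp, hp2⟩ := Finset.mem_image.mp hyq
      have hpxy : p = (x, y) := hinj2 p (hqsub hp) (x,y) hxyS hp2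
      exact (Finset.mem_erase.mp hp).1 hpxy
    have hyq1 : y ∉ q.image Prod.fst :=
      fun h => hyf (Finset.image_subset_image hqsub h)
    have hq1 : ∀ p ∈ q, ∀ r ∈ q, p.1 = r.1 → p = r :=
      fun p hp r hr h => hinj1 p (hqsub hp) r (hqsub hr) h
    have hq2 : ∀ p ∈ q, ∀ r ∈ q, p.2 = r.2 → p = r :=
      fun p hp r hr h => hinj2 p (hqsub hp) r (hqsub hr) h
    have hqA : Acyclic q := by
      rintro ⟨a, j, hj, hr⟩
      exact hA ⟨a, j, hj, reach_mono hqsub j a a hr⟩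
    have hqE : q.card ≤ E := le_trans (Finset.card_le_card hqsub) hE
    set FQ := q.image Prod.fst with hFQ
    set SQ := q.image Prod.snd with hSQ
    set cq := (FQ \ SQ).card with hcq
    have hcqn : cq ≤ n := le_trans (Finset.card_le_univ _) (by simp)
    have hfstS : S.image Prod.fst = insert x FQ := by
      rw [hS_ins, Finset.image_insert]
    have hsndS : S.image Prod.snd = insert y SQ := by
      rw [hS_ins, Finset.image_insert]
    -- measure control for q
    obtain ⟨A, hAe⟩ : ∃ A, (e - 1) * (n+1) = A := ⟨_, rfl⟩
    have hexp : e * (n+1) = A + (n+1) := by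
      rw [← hAe]
      have h' : e = (e - 1) + 1 := by omega
      calc e * (n+1) = ((e-1)+1) * (n+1) := by rw [← h']
        _ = (e-1)*(n+1) + (n+1) := by ring
    have hSfs : (S.image Prod.fst \ S.image Prod.snd) = (insert x FQ) \ SQ := by
      rw [hfstS, hsndS]
      ext z
      simp only [Finset.mem_sdiff, Finset.mem_insert]
      constructor
      · rintro ⟨h1, h2⟩
        exact ⟨h1, fun hz => h2 (Or.inr hz)⟩
      · rintro ⟨h1, h2⟩
        refine ⟨h1, ?_⟩
        rintro (hz | hz)
        · subst hz
          rcases h1 with h1 | h1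
          · exact hyx h1
          · exact hyq1 h1
        · exact h2 hz
    set cS := (S.image Prod.fst \ S.image Prod.snd).card with hcS
    rw [hexp] at hm
    have hmq : q.card * (n+1) + (FQ \ SQ).card ≤ N := by
      rw [hqcard, hAe]
      omega
    have hcntq : cnt w q = n * (n - e).factorial := by
      have := ih q hmq hq1 hq2 hqA hqE
      rw [hqcard] at this
      rw [this]
      congr 2
      omega
    -- the fiber decomposition
    set X := n * (n - e - 1).factorial with hX
    set Y := cnt w S with hY
    set U1 := (FQ \ SQ).filter (fun a => ¬ ∃ i, reach q i a x) with hU1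
    set F := Finset.univ \ (FQ ∪ SQ ∪ {x}) with hF
    have hdisj : Disjoint U1 F := by
      rw [Finset.disjoint_left]
      intro a haU haF
      rw [hU1, Finset.mem_filter, Finset.mem_sdiff] at haU
      rw [hF, Finset.mem_sdiff, Finset.mem_union, Finset.mem_union] at haF
      exact haF.2 (Or.inl (Or.inl haU.1.1))
    have hyF : y ∈ F := by
      rw [hF, Finset.mem_sdiff, Finset.mem_union, Finset.mem_union]
      refine ⟨Finset.mem_univ _, ?_⟩
      rintro ((h | h) | h)
      · exact hyq1 h
      · exact hyq2 h
      · exact hyx (Finset.mem_singleton.mp h)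
    have hYfresh : ∀ a ∈ F, cnt w (insert (x,a) q) = Y := by
      intro a haF
      rw [hF, Finset.mem_sdiff, Finset.mem_union, Finset.mem_union] at haF
      push_neg at haF
      obtain ⟨-, ⟨h1, h2⟩, h3'⟩ := haF
      have h3 : a ≠ x := by simpa using h3'
      rw [hY, hS_ins]
      exact cnt_insert_fresh_eq w q x h1 h2 h3 hyq1 hyq2 hyx
    have hins_card : ∀ a : Fin n, (insert (x, a) q).card = e := by
      intro a
      have : (x, a) ∉ q := fun h => hxq (Finset.mem_image.mpr ⟨(x,a), h, rfl⟩)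
      rw [Finset.card_insert_of_notMem this, hqcard]
      omega
    have hXjoin : ∀ a ∈ U1, cnt w (insert (x,a) q) = X := by
      intro a haU
      rw [hU1, Finset.mem_filter, Finset.mem_sdiff] at haU
      obtain ⟨⟨haf, has⟩, hnr⟩ := haU
      have hax : a ≠ x := fun h => hnr ⟨0, h ▸ rfl⟩
      -- injectivity of the extended pattern
      have hinj1' : ∀ p ∈ insert (x,a) q, ∀ r ∈ insert (x,a) q, p.1 = r.1 → p = r := by
        intro p hp r hr hpr
        rcases Finset.mem_insert.mp hp with hp' | hp' <;>
          rcases Finset.mem_insert.mp hr with hr' | hr'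
        · rw [hp', hr']
        · exfalso
          apply hxq
          refine Finset.mem_image.mpr ⟨r, hr', ?_⟩
          rw [← hpr, hp']
        · exfalso
          apply hxq
          refine Finset.mem_image.mpr ⟨p, hp', ?_⟩
          rw [hpr, hr']
        · exact hq1 p hp' r hr' hpr
      have hinj2' : ∀ p ∈ insert (x,a) q, ∀ r ∈ insert (x,a) q, p.2 = r.2 → p = r := by
        intro p hp r hr hpr
        rcases Finset.mem_insert.mp hp with hp' | hp' <;>
          rcases Finset.mem_insert.mp hr with hr' | hr'
        · rw [hp', hr']
        · exfalso
          apply has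
          refine Finset.mem_image.mpr ⟨r, hr', ?_⟩
          rw [← hpr, hp']
        · exfalso
          apply has
          refine Finset.mem_image.mpr ⟨p, hp', ?_⟩
          rw [hpr, hr']
        · exact hq2 p hp' r hr' hpr
      have hA' : Acyclic (insert (x,a) q) := acyclic_insert hqA hxq hnr
      have hE' : (insert (x,a) q).card ≤ E := by rw [hins_card a]; exact hE
      -- measure strictly decreased
      have him1 : (insert (x,a) q).image Prod.fst = insert x FQ := by
        rw [Finset.image_insert]
      have him2 : (insert (x,a) q).image Prod.snd = insert a SQ := by
        rw [Finset.image_insert]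
      have hsd : (insert x FQ) \ (insert a SQ) = ((insert x FQ) \ SQ).erase a := by
        ext z
        simp only [Finset.mem_sdiff, Finset.mem_insert, Finset.mem_erase]
        tauto
      have hamem : a ∈ (insert x FQ) \ SQ :=
        Finset.mem_sdiff.mpr ⟨Finset.mem_insert_of_mem haf, has⟩
      have hcS1 : 1 ≤ cS := by
        rw [hcS, hSfs]
        exact Finset.card_pos.mpr ⟨a, hamem⟩
      have hmeas : (insert (x,a) q).card * (n+1) +
          ((insert (x,a) q).image Prod.fst \ (insert (x,a) q).image Prod.snd).card ≤ N := by
        rw [hins_card a, him1, him2, hsd, Finset.card_erase_of_mem hamem]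
        rw [← hSfs, ← hcS, hexp]
        omega
      have := ih (insert (x,a) q) hmeas hinj1' hinj2' hA' hE'
      rw [hins_card a] at this
      rw [this, hX]
    have hZero : ∀ a ∈ Finset.univ \ (U1 ∪ F), cnt w (insert (x,a) q) = 0 := by
      intro a ha
      rw [Finset.mem_sdiff, Finset.mem_union] at ha
      push_neg at ha
      obtain ⟨-, haU, haF⟩ := ha
      by_cases h2 : a ∈ SQ
      · rw [cnt, solset_insert_snd_empty hxq h2, Finset.card_empty]
      by_cases h3 : ∃ i, reach q i a x
      · obtain ⟨i, hi⟩ := h3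
        have hr1 : reach (insert (x,a) q) i a x :=
          reach_mono (Finset.subset_insert _ _) _ _ _ hi
        have hr2 : reach (insert (x,a) q) (i+1) a a :=
          (reach_add i 1 a a).mpr ⟨x, hr1, ⟨a, Finset.mem_insert_self _ _, rfl⟩⟩
        have hcard'' : (insert (x,a) q).card ≤ E := by rw [hins_card a]; exact hE
        rw [cnt, solset_empty_of_cycle hw hcard'' (by omega) hr2, Finset.card_empty]
      · exfalso
        by_cases h4 : a ∈ FQ
        · exact haU (by rw [hU1, Finset.mem_filter, Finset.mem_sdiff]; exact ⟨⟨h4, h2⟩, h3⟩)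
        · have hax : a ≠ x := fun h => h3 ⟨0, h ▸ rfl⟩
          apply haF
          rw [hF, Finset.mem_sdiff, Finset.mem_union, Finset.mem_union]
          refine ⟨Finset.mem_univ _, ?_⟩
          rintro ((h | h) | h)
          · exact h4 h
          · exact h2 h
          · exact hax (Finset.mem_singleton.mp h)
    -- assemble the sum
    have hsum : cnt w q = U1.card * X + F.card * Y := by
      rw [cnt_fiber w q x]
      rw [← Finset.sum_sdiff (Finset.subset_univ (U1 ∪ F))]
      rw [Finset.sum_eq_zero hZero, zero_add]
      rw [Finset.sum_union hdisj]
      rw [Finset.sum_congr rfl hXjoin, Finset.sum_congr rfl hYfresh]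
      rw [Finset.sum_const, Finset.sum_const, smul_eq_mul, smul_eq_mul]
    -- cardinalities
    have hSQcard : SQ.card = q.card := by
      rw [hSQ]
      apply Finset.card_image_of_injOn
      intro p hp r hr hpr
      exact hq2 p (Finset.mem_coe.mp hp) r (Finset.mem_coe.mp hr) hpr
    have hVq : (FQ ∪ SQ).card = cq + (e - 1) := by
      rw [← Finset.card_sdiff_add_card, ← hcq, hSQcard, hqcard]
    have hyVq : y ∉ FQ ∪ SQ := by
      rw [Finset.mem_union]
      rintro (h | h)
      · exact hyq1 h
      · exact hyq2 h
    have hcancel : ∀ {cq' K : ℕ}, 0 < K → cq' + K = n - e →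
        cnt w q = cq' * X + K * Y → Y = X := by
      intro cq' K hK hco hsum'
      have hfac : (n - e).factorial = (n - e) * ((n - e) - 1).factorial := by
        have hh : n - e = ((n - e) - 1) + 1 := by omega
        rw [hh, Nat.factorial_succ, ← hh]
      have hid : cnt w q = cq' * X + K * X := by
        rw [hcntq, hfac, hX, ← add_mul, hco]
        ring
      have h1 : cq' * X + K * Y = cq' * X + K * X := by rw [← hsum', hid]
      have h2 : K * Y = K * X := Nat.add_left_cancel h1
      exact Nat.eq_of_mul_eq_mul_left hK h2
    by_cases hx2 : x ∈ SQ
    · obtain ⟨a₀, ⟨j₀, hj₀⟩, ha₀⟩ := exists_source hqA hx2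
      have ha₀x : a₀ ≠ x := fun h => ha₀ (h ▸ hx2)
      have hj₀1 : 1 ≤ j₀ := by
        rcases Nat.eq_zero_or_pos j₀ with h | h
        · exfalso
          rw [h] at hj₀
          exact ha₀x hj₀
        · exact h
      have ha₀f : a₀ ∈ FQ := by
        obtain ⟨m, hm'⟩ : ∃ m, j₀ = m + 1 := ⟨j₀ - 1, by omega⟩
        rw [hm'] at hj₀
        exact reach_src hj₀
      have hq2' : ∀ p ∈ q, ∀ r ∈ q, p.2 = r.2 → p.1 = r.1 :=
        fun p hp r hr h => by rw [hq2 p hp r hr h]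
      have hU1eq : U1 = (FQ \ SQ).erase a₀ := by
        ext z
        rw [hU1, Finset.mem_filter, Finset.mem_erase]
        constructor
        · rintro ⟨hz1, hz2⟩
          refine ⟨fun h => hz2 ?_, hz1⟩
          subst h
          exact ⟨j₀, hj₀⟩
        · rintro ⟨hz1, hz2⟩
          refine ⟨hz2, ?_⟩
          rintro ⟨i, hi⟩
          exact hz1 (source_unique hq2' hi hj₀ (Finset.mem_sdiff.mp hz2).2 ha₀)
      have ha₀mem : a₀ ∈ FQ \ SQ := Finset.mem_sdiff.mpr ⟨ha₀f, ha₀⟩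
      have hcq1 : 1 ≤ cq := by
        rw [hcq]
        exact Finset.card_pos.mpr ⟨a₀, ha₀mem⟩
      have hU1card : U1.card = cq - 1 := by
        rw [hU1eq, Finset.card_erase_of_mem ha₀mem, hcq]
      have hxun : FQ ∪ SQ ∪ {x} = FQ ∪ SQ := by
        apply Finset.union_eq_left.mpr
        intro z hz
        rw [Finset.mem_singleton] at hz
        subst hz
        exact Finset.mem_union_right _ hx2
      have hFcard : F.card = n - (cq + (e-1)) := by
        rw [hF, hxun, Finset.card_sdiff_of_subset (Finset.subset_univ _), hVq,
          Finset.card_univ, Fintype.card_fin]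
      have hnVS : cq + e ≤ n := by
        have h1 : (insert y (FQ ∪ SQ)).card ≤ n := by
          refine le_trans (Finset.card_le_univ _) ?_
          simp
        rw [Finset.card_insert_of_notMem hyVq, hVq] at h1
        omega
      rw [hU1card, hFcard] at hsum
      exact hcancel (by omega) (by omega) hsum
    · have hU1eq : U1 = FQ \ SQ := by
        rw [hU1]
        apply Finset.filter_true_of_mem
        intro z hz
        rintro ⟨i, hi⟩
        rcases Nat.eq_zero_or_pos i with h | h
        · rw [h] at hi
          have hzx : z = x := hi
          subst hzx
          exact hxq (Finset.mem_sdiff.mp hz).1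
        · exact hx2 (reach_tgt h hi)
      have hU1card : U1.card = cq := by rw [hU1eq, hcq]
      have hxVq : x ∉ FQ ∪ SQ := by
        rw [Finset.mem_union]
        rintro (h | h)
        · exact hxq h
        · exact hx2 h
      have hxins : FQ ∪ SQ ∪ {x} = insert x (FQ ∪ SQ) := by
        ext z
        simp only [Finset.mem_union, Finset.mem_insert, Finset.mem_singleton]
        tauto
      have hFcard : F.card = n - (cq + (e-1)) - 1 := by
        rw [hF, hxins, Finset.card_sdiff_of_subset (Finset.subset_univ _),
          Finset.card_insert_of_notMem hxVq, hVq, Finset.card_univ, Fintype.card_fin]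
        omega
      have hnVS : cq + e + 1 ≤ n := by
        have hyx' : y ∉ insert x (FQ ∪ SQ) := by
          rw [Finset.mem_insert]
          rintro (h | h)
          · exact hyx h
          · exact hyVq h
        have h1 : (insert y (insert x (FQ ∪ SQ))).card ≤ n := by
          refine le_trans (Finset.card_le_univ _) ?_
          simp
        rw [Finset.card_insert_of_notMem hyx',
          Finset.card_insert_of_notMem hxVq, hVq] at h1
        omega
      rw [hU1card, hFcard] at hsum
      exact hcancel (by omega) (by omega) hsum

lemma map_eq_iff_zip (w : Equiv.Perm (Fin n)) :
    ∀ (I J : List (Fin n)), I.length = J.length →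
      (I.map ⇑w = J ↔ ∀ p ∈ I.zip J, w p.1 = p.2) := by
  intro I
  induction I with
  | nil =>
    intro J hJ
    cases J with
    | nil => simp
    | cons b J' => simp at hJ
  | cons a I' ih =>
    intro J hJ
    cases J with
    | nil => simp at hJ
    | cons b J' =>
      simp only [List.map_cons, List.cons.injEq, List.zip_cons_cons, List.mem_cons]
      rw [ih J' (by simpa using hJ)]
      constructor
      · rintro ⟨h1, h2⟩ p hp
        rcases hp with hp | hp
        · rw [hp]
          exact h1
        · exact h2 p hp
      · intro h
        exact ⟨h (a, b) (Or.inl rfl), fun p hp => h p (Or.inr hp)⟩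

lemma indFunR_eq_chiF {I J : List (Fin n)} (h : I.length = J.length) :
    indFunR I J = chiF (I.zip J).toFinset := by
  funext w
  rw [indFunR, chiF]
  apply if_congr ?_ rfl rfl
  rw [map_eq_iff_zip w I J h]
  constructor
  · intro hh p hp
    exact hh p (List.mem_toFinset.mp hp)
  · intro hh p hp
    exact hh p (List.mem_toFinset.mpr hp)

lemma isLocal_mem_span {k : ℕ} {f : Equiv.Perm (Fin n) → ℝ} (hf : IsLocalR n k f) :
    f ∈ Submodule.span ℝ (genSet n k) := by
  refine Submodule.span_le.mpr ?_ hf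
  rintro g ⟨I, J, hI, hJ, hlen, hk, rfl⟩
  apply Submodule.subset_span
  refine ⟨(I.zip J).toFinset, ?_, indFunR_eq_chiF hlen⟩
  calc (I.zip J).toFinset.card ≤ (I.zip J).length := (I.zip J).toFinset_card_le
    _ ≤ I.length := by rw [List.length_zip]; omega
    _ ≤ k := hk

lemma chiF_mul (S T : Finset (Fin n × Fin n)) :
    chiF S * chiF T = chiF (S ∪ T) := by
  funext w
  simp only [Pi.mul_apply, chiF]
  by_cases h1 : ∀ p ∈ S, w p.1 = p.2 <;> by_cases h2 : ∀ p ∈ T, w p.1 = p.2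
  · rw [if_pos h1, if_pos h2, if_pos (Finset.forall_mem_union.mpr ⟨h1, h2⟩), one_mul]
  · rw [if_pos h1, if_neg h2, if_neg (fun hh => h2 (Finset.forall_mem_union.mp hh).2), mul_zero]
  · rw [if_neg h1, if_pos h2, if_neg (fun hh => h1 (Finset.forall_mem_union.mp hh).1), zero_mul]
  · rw [if_neg h1, if_neg h2, if_neg (fun hh => h1 (Finset.forall_mem_union.mp hh).1), zero_mul]

lemma mul_mem_span {k m : ℕ} {f g : Equiv.Perm (Fin n) → ℝ}
    (hf : f ∈ Submodule.span ℝ (genSet n k)) (hg : g ∈ Submodule.span ℝ (genSet n m)) :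
    f * g ∈ Submodule.span ℝ (genSet n (k + m)) := by
  induction hf using Submodule.span_induction with
  | mem f' hf' =>
    induction hg using Submodule.span_induction with
    | mem g' hg' =>
      obtain ⟨S, hS, rfl⟩ := hf'
      obtain ⟨T, hT, rfl⟩ := hg'
      rw [chiF_mul]
      apply Submodule.subset_span
      exact ⟨S ∪ T, le_trans (Finset.card_union_le _ _) (by omega), rfl⟩
    | zero => rw [mul_zero]; exact Submodule.zero_mem _
    | add g1 g2 hg1 hg2 ih1 ih2 => rw [mul_add]; exact Submodule.add_mem _ ih1 ih2
    | smul a g' hg' ih => rw [mul_smul_comm]; exact Submodule.smul_mem _ a ih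
  | zero => rw [zero_mul]; exact Submodule.zero_mem _
  | add f1 f2 hf1 hf2 ih1 ih2 => rw [add_mul]; exact Submodule.add_mem _ ih1 ih2
  | smul a f' hf' ih => rw [smul_mul_assoc]; exact Submodule.smul_mem _ a ih

lemma pow_mem_span {k : ℕ} {f : Equiv.Perm (Fin n) → ℝ}
    (hf : f ∈ Submodule.span ℝ (genSet n k)) (d : ℕ) :
    f ^ d ∈ Submodule.span ℝ (genSet n (d * k)) := by
  induction d with
  | zero =>
    apply Submodule.subset_span
    refine ⟨∅, by simp, ?_⟩
    funext w
    simp [chiF]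
  | succ d ih =>
    rw [pow_succ, Nat.succ_mul]
    exact mul_mem_span ih hf

lemma reynolds_chiF (w : Equiv.Perm (Fin n)) (S : Finset (Fin n × Fin n)) :
    reynolds (chiF S) w = (n.factorial : ℝ)⁻¹ * (cnt w S : ℝ) := by
  rw [reynolds]
  congr 1
  have h : ∀ v : Equiv.Perm (Fin n),
      chiF S (v⁻¹ * w * v) = if (∀ p ∈ S, v p.2 = w (v p.1)) then (1:ℝ) else 0 := by
    intro v
    rw [chiF]
    apply if_congr ?_ rfl rfl
    constructor
    · intro hh p hp
      have := hh p hp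
      simp only [Equiv.Perm.mul_apply] at this
      rw [← this]
      simp
    · intro hh p hp
      have := hh p hp
      simp only [Equiv.Perm.mul_apply]
      rw [← this]
      simp
  rw [Finset.sum_congr rfl (fun v _ => h v)]
  rw [Finset.sum_boole]
  rfl

lemma reynolds_add (f g : Equiv.Perm (Fin n) → ℝ) (w : Equiv.Perm (Fin n)) :
    reynolds (f + g) w = reynolds f w + reynolds g w := by
  simp [reynolds, Finset.sum_add_distrib, mul_add]

lemma reynolds_smul (a : ℝ) (f : Equiv.Perm (Fin n) → ℝ) (w : Equiv.Perm (Fin n)) :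
    reynolds (a • f) w = a * reynolds f w := by
  rw [reynolds, reynolds]
  rw [show ∑ v : Equiv.Perm (Fin n), (a • f) (v⁻¹*w*v) = a * ∑ v : Equiv.Perm (Fin n), f (v⁻¹*w*v) from by
    rw [Finset.mul_sum]; exact Finset.sum_congr rfl (fun v _ => rfl)]
  ring

lemma reynolds_zero (w : Equiv.Perm (Fin n)) :
    reynolds (0 : Equiv.Perm (Fin n) → ℝ) w = 0 := by
  simp [reynolds]

lemma reynolds_eq_on_span {E : ℕ} {w c : Equiv.Perm (Fin n)}
    (hwc : ∀ S : Finset (Fin n × Fin n), S.card ≤ E → cnt w S = cnt c S)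
    {f : Equiv.Perm (Fin n) → ℝ} (hf : f ∈ Submodule.span ℝ (genSet n E)) :
    reynolds f w = reynolds f c := by
  induction hf using Submodule.span_induction with
  | mem g hg =>
    obtain ⟨S, hS, rfl⟩ := hg
    rw [reynolds_chiF, reynolds_chiF, hwc S hS]
  | zero => rw [reynolds_zero, reynolds_zero]
  | add f1 f2 h1 h2 ih1 ih2 => rw [reynolds_add, reynolds_add, ih1, ih2]
  | smul a g hg ih => rw [reynolds_smul, reynolds_smul, ih]

lemma solset_empty_notinj1 {w : Equiv.Perm (Fin n)} {S : Finset (Fin n × Fin n)}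
    (h : ¬ ∀ p ∈ S, ∀ r ∈ S, p.1 = r.1 → p = r) : SolSet w S = ∅ := by
  push_neg at h
  obtain ⟨p, hp, r, hr, h1, h2⟩ := h
  rw [Finset.eq_empty_iff_forall_notMem]
  intro v hv
  rw [SolSet, Finset.mem_filter] at hv
  have e1 : v p.2 = w (v p.1) := hv.2 p hp
  have e2 : v r.2 = w (v r.1) := hv.2 r hr
  rw [h1] at e1
  have : p.2 = r.2 := v.injective (e1.trans e2.symm)
  exact h2 (Prod.ext h1 this)

lemma solset_empty_notinj2 {w : Equiv.Perm (Fin n)} {S : Finset (Fin n × Fin n)}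
    (h : ¬ ∀ p ∈ S, ∀ r ∈ S, p.2 = r.2 → p = r) : SolSet w S = ∅ := by
  push_neg at h
  obtain ⟨p, hp, r, hr, h1, h2⟩ := h
  rw [Finset.eq_empty_iff_forall_notMem]
  intro v hv
  rw [SolSet, Finset.mem_filter] at hv
  have e1 : v p.2 = w (v p.1) := hv.2 p hp
  have e2 : v r.2 = w (v r.1) := hv.2 r hr
  rw [h1] at e1
  have h3 : v p.1 = v r.1 := w.injective (e1.symm.trans e2)
  have h4 : p.1 = r.1 := v.injective h3
  exact h2 (Prod.ext h4 h1)

lemma cnt_eq_of_allLong (hn : 0 < n) {w c : Equiv.Perm (Fin n)} {E : ℕ}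
    (hw : AllLong w E) (hc : AllLong c E) {S : Finset (Fin n × Fin n)}
    (hS : S.card ≤ E) : cnt w S = cnt c S := by
  by_cases h1 : ∀ p ∈ S, ∀ r ∈ S, p.1 = r.1 → p = r
  · by_cases h2 : ∀ p ∈ S, ∀ r ∈ S, p.2 = r.2 → p = r
    · by_cases hA : Acyclic S
      · rw [main_count hn hw _ S le_rfl h1 h2 hA hS,
          main_count hn hc _ S le_rfl h1 h2 hA hS]
      · obtain ⟨a, j, hj, hr⟩ := not_not.mp hA
        rw [cnt, solset_empty_of_cycle hw hS hj hr, cnt,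
          solset_empty_of_cycle hc hS hj hr]
    · rw [cnt, solset_empty_notinj2 h2, cnt, solset_empty_notinj2 h2]
  · rw [cnt, solset_empty_notinj1 h1, cnt, solset_empty_notinj1 h1]

end MomentAux

/-- Let `f : S_n → ℝ` be `k`-local and `d ≥ 0`.  If the cycle type `λ` of `w` has no cycles
of length `≤ dk` (i.e. `m_1(λ) = ⋯ = m_{dk}(λ) = 0`), then the `d`-th conditional moment of
`f` on `K_λ` equals that on the class of `n`-cycles:
`E(f^d | K_λ) = E(f^d | K_{(n)})`. -/
theorem moment_eq_on_long_cycle_classes {n k d : ℕ} (f : Equiv.Perm (Fin n) → ℝ)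
    (hf : IsLocalR n k f) (w c : Equiv.Perm (Fin n))
    (hw : ∀ i : ℕ, 1 ≤ i → i ≤ d * k → numCycLen w i = 0)
    (hc : typeOf c = {n}) :
    reynolds (fun u => f u ^ d) w = reynolds (fun u => f u ^ d) c := by
  classical
  open MomentAux in
  have hn : 0 < n := MomentAux.n_pos_of_typeOf hc
  have hwA : MomentAux.AllLong w (d * k) := MomentAux.allLong_of_numCycLen hw
  have hEn : d * k < n := MomentAux.E_lt_n hn hwA
  have hcA : MomentAux.AllLong c (d * k) := MomentAux.allLong_of_typeOf hc hEn
  have hcnt : ∀ S : Finset (Fin n × Fin n), S.card ≤ d * k →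
      MomentAux.cnt w S = MomentAux.cnt c S :=
    fun S hS => MomentAux.cnt_eq_of_allLong hn hwA hcA hS
  have hfd : (fun u => f u ^ d) ∈ Submodule.span ℝ (MomentAux.genSet n (d * k)) := by
    have h1 := MomentAux.pow_mem_span (MomentAux.isLocal_mem_span hf) d
    have h2 : (fun u => f u ^ d) = f ^ d := rfl
    rw [h2]
    exact h1
  exact MomentAux.reynolds_eq_on_span hcnt hfd
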